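/- Under the ensemble setting, suppose Z_N(β) ∈ (0,∞) and p_N(r) = P_N{h_N ∈ [u−r, u+r]} > 0. Then for P_N^{u,r}-almost every ω, (1/N) ln (dP_N^{u,r}/dP_{N,β})(ω) = β h_N(ω) + (1/N) ln Z_N(β) − (1/N) ln p_N(r), and hence |(1/N) ln (dP_N^{u,r}/dP_{N,β})(ω) − (β u + (1/N) ln Z_N(β) − (1/N) ln p_N(r))| ≤ |β| r for P_N^{u,r}-almost every ω. Consequently, if φ(β) = lim_N −(1/N) ln Z_N(β) exists and is finite, and (1/N) ln p_N(r) → L(r) as N → ∞ with L(r) → s(u) ∈ ℝ as r → 0⁺, then lim_{r→0⁺} limsup_{N→∞} esssup_{P_N^{u,r}} |(1/N) ln (dP_N^{u,r}/dP_{N,β}) − (β u − s(u) − φ(β))| = 0; i.e., the specific action converges P_N^{u,r}-a.e., uniformly, to J_β(u) = β u − s(u) − φ(β). -/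

import Mathlib

/-!
STATEMENT 17: The specific action `(1/N) ln (dP_N^{u,r}/dP_{N,β})`. For `P_N^{u,r}`-a.e.
`ω` it equals `β h_N(ω) + (1/N) ln Z_N(β) - (1/N) ln p_N(r)`, hence it lies within
`|β| r` of `β u + (1/N) ln Z_N(β) - (1/N) ln p_N(r)` almost everywhere. Consequently, if
`-(1/N) ln Z_N(β) → φ(β) ∈ ℝ` and `(1/N) ln p_N(r) → L(r)` with `L(r) → s(u) ∈ ℝ` as
`r → 0⁺`, then
`lim_{r→0⁺} limsup_N esssup_{P_N^{u,r}} |(1/N) ln (dP_N^{u,r}/dP_{N,β}) - J_β(u)| = 0`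
with `J_β(u) = β u - s(u) - φ(β)`: the specific action converges uniformly
`P_N^{u,r}`-a.e. to `J_β(u)`.
-/

open MeasureTheory Filter Set Topology
open scoped ENNReal

variable {Ω : ℕ → Type*} [∀ N, MeasurableSpace (Ω N)]

/-- Partition function of the canonical ensemble at inverse temperature `β`. -/
noncomputable def canZ (P : ∀ N, Measure (Ω N)) (h : ∀ N, Ω N → ℝ) (β : ℝ) (N : ℕ) : ℝ≥0∞ :=
  ∫⁻ ω, ENNReal.ofReal (Real.exp (-(β * (N : ℝ) * h N ω))) ∂(P N)

/-- The canonical ensemble `P_{N,β} = Z_N(β)⁻¹ e^{-βNh_N} P_N`. -/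
noncomputable def canMeasure (P : ∀ N, Measure (Ω N)) (h : ∀ N, Ω N → ℝ) (β : ℝ) (N : ℕ) :
    Measure (Ω N) :=
  (canZ P h β N)⁻¹ •
    (P N).withDensity fun ω => ENNReal.ofReal (Real.exp (-(β * (N : ℝ) * h N ω)))

/-- The microcanonical ensemble `P_N^{u,r} = P_N(· | h_N ∈ [u-r,u+r])`. -/
noncomputable def microMeasure (P : ∀ N, Measure (Ω N)) (h : ∀ N, Ω N → ℝ) (u r : ℝ)
    (N : ℕ) : Measure (Ω N) :=
  ProbabilityTheory.cond (P N) {ω | h N ω ∈ Set.Icc (u - r) (u + r)}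

/-- The specific action `(1/N) ln (dP_N^{u,r}/dP_{N,β})`. -/
noncomputable def specificAction (P : ∀ N, Measure (Ω N)) (h : ∀ N, Ω N → ℝ) (β u r : ℝ)
    (N : ℕ) (ω : Ω N) : ℝ :=
  (N : ℝ)⁻¹ *
    Real.log (((microMeasure P h u r N).rnDeriv (canMeasure P h β N) ω).toReal)

/-- The microcanonical ensemble is the canonical ensemble with density
`p_N(r)⁻¹ Z_N(β) e^{βNh_N} 1_S`. -/
lemma micro_eq_withDensity (P : ∀ N, Measure (Ω N)) (h : ∀ N, Ω N → ℝ)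
    (hmeas : ∀ N, Measurable (h N)) (β u r : ℝ) (N : ℕ)
    (hZ0 : canZ P h β N ≠ 0) (hZt : canZ P h β N ≠ ∞) :
    (canMeasure P h β N).withDensity
      (fun ω => (P N {ω' | h N ω' ∈ Set.Icc (u - r) (u + r)})⁻¹ * canZ P h β N *
        ENNReal.ofReal (Real.exp (β * (N : ℝ) * h N ω)) *
        ({ω' | h N ω' ∈ Set.Icc (u - r) (u + r)}).indicator 1 ω)
      = microMeasure P h u r N := by
  set S : Set (Ω N) := {ω' | h N ω' ∈ Set.Icc (u - r) (u + r)} with hSdef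
  have hS : MeasurableSet S := (hmeas N) measurableSet_Icc
  set c : ℝ≥0∞ := (P N S)⁻¹ * canZ P h β N with hc
  set g : Ω N → ℝ≥0∞ := fun ω => ENNReal.ofReal (Real.exp (-(β * (N : ℝ) * h N ω))) with hg
  set f : Ω N → ℝ≥0∞ := fun ω =>
      c * ENNReal.ofReal (Real.exp (β * (N : ℝ) * h N ω)) * S.indicator 1 ω with hf
  have hmg : Measurable g := by
    exact (Real.measurable_exp.comp ((hmeas N).const_mul (β * (N : ℝ))).neg).ennreal_ofReal
  have hmf : Measurable f := by
    exact ((measurable_const.mul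
      (Real.measurable_exp.comp ((hmeas N).const_mul (β * (N : ℝ)))).ennreal_ofReal).mul
      (measurable_one.indicator hS))
  have hgf : g * f = fun ω => (c * S.indicator 1 ω) := by
    funext ω
    simp only [Pi.mul_apply, hg, hf]
    rw [show g ω * (c * ENNReal.ofReal (Real.exp (β * (N : ℝ) * h N ω)) * S.indicator 1 ω)
        = c * (g ω * ENNReal.ofReal (Real.exp (β * (N : ℝ) * h N ω))) * S.indicator 1 ω by ring]
    rw [hg]
    rw [← ENNReal.ofReal_mul (Real.exp_pos _).le, ← Real.exp_add]
    simp
  have step : (canMeasure P h β N).withDensity f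
      = (canZ P h β N)⁻¹ • ((P N).withDensity (g * f)) := by
    rw [canMeasure, withDensity_smul_measure, withDensity_mul _ hmg hmf]
  rw [step, hgf]
  rw [show (fun ω => c * S.indicator 1 ω) = c • (S.indicator (1 : Ω N → ℝ≥0∞)) from rfl]
  rw [withDensity_smul c (measurable_one.indicator hS), withDensity_indicator_one hS]
  rw [microMeasure, ProbabilityTheory.cond, ← hSdef, smul_smul, hc,
    show (canZ P h β N)⁻¹ * ((P N S)⁻¹ * canZ P h β N) = (P N S)⁻¹ by
      rw [mul_comm (P N S)⁻¹, ← mul_assoc, ENNReal.inv_mul_cancel hZ0 hZt, one_mul]]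

/-- The canonical ensemble is a probability measure. -/
lemma canMeasure_isProb (P : ∀ N, Measure (Ω N)) (h : ∀ N, Ω N → ℝ) (β : ℝ) (N : ℕ)
    (hZ0 : canZ P h β N ≠ 0) (hZt : canZ P h β N ≠ ∞) :
    IsProbabilityMeasure (canMeasure P h β N) := by
  constructor
  rw [canMeasure, Measure.smul_apply, withDensity_apply _ MeasurableSet.univ,
    Measure.restrict_univ, smul_eq_mul]
  exact ENNReal.inv_mul_cancel hZ0 hZt

/-- `P_N^{u,r}`-a.e., the Radon–Nikodym derivative of the microcanonical w.r.t. the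
canonical ensemble equals `p_N(r)⁻¹ Z_N(β) e^{βNh_N}`, and `h_N ∈ [u-r, u+r]`. -/
lemma micro_rnDeriv_ae (P : ∀ N, Measure (Ω N)) (h : ∀ N, Ω N → ℝ)
    (hmeas : ∀ N, Measurable (h N)) (β u r : ℝ) (N : ℕ)
    (hZ0 : canZ P h β N ≠ 0) (hZt : canZ P h β N ≠ ∞) :
    ∀ᵐ ω ∂(microMeasure P h u r N),
      (microMeasure P h u r N).rnDeriv (canMeasure P h β N) ω
        = (P N {ω' | h N ω' ∈ Set.Icc (u - r) (u + r)})⁻¹ * canZ P h β N *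
            ENNReal.ofReal (Real.exp (β * (N : ℝ) * h N ω))
      ∧ ω ∈ {ω' | h N ω' ∈ Set.Icc (u - r) (u + r)} := by
  set S : Set (Ω N) := {ω' | h N ω' ∈ Set.Icc (u - r) (u + r)} with hSdef
  have hS : MeasurableSet S := (hmeas N) measurableSet_Icc
  set f : Ω N → ℝ≥0∞ := fun ω => (P N S)⁻¹ * canZ P h β N *
      ENNReal.ofReal (Real.exp (β * (N : ℝ) * h N ω)) * S.indicator 1 ω with hf
  have hmf : Measurable f :=
    ((measurable_const.mul
      (Real.measurable_exp.comp ((hmeas N).const_mul (β * (N : ℝ)))).ennreal_ofReal).mul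
      (measurable_one.indicator hS))
  haveI : IsProbabilityMeasure (canMeasure P h β N) := canMeasure_isProb P h β N hZ0 hZt
  have heq := micro_eq_withDensity P h hmeas β u r N hZ0 hZt
  have hac : microMeasure P h u r N ≪ canMeasure P h β N := by
    rw [← heq]; exact withDensity_absolutelyContinuous _ _
  have hrn : (microMeasure P h u r N).rnDeriv (canMeasure P h β N) =ᵐ[canMeasure P h β N] f := by
    conv_lhs => rw [← heq]
    exact Measure.rnDeriv_withDensity _ hmf
  have hrn' := hac.ae_le hrn
  have hmem : ∀ᵐ ω ∂(microMeasure P h u r N), ω ∈ S := by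
    rw [microMeasure, ProbabilityTheory.cond]
    exact Measure.ae_smul_measure (ae_restrict_mem hS) _
  filter_upwards [hrn', hmem] with ω h1 h2
  refine ⟨?_, h2⟩
  rw [h1, hf]
  simp [Set.indicator_of_mem h2]

theorem specific_action_converges_to_canonical_rate
    (P : ∀ N, Measure (Ω N)) [∀ N, IsProbabilityMeasure (P N)]
    (h : ∀ N, Ω N → ℝ) (hmeas : ∀ N, Measurable (h N))
    (β u : ℝ)
    (hZfin : ∀ N, 0 < canZ P h β N ∧ canZ P h β N ≠ ∞) :
    (∀ N : ℕ, 0 < N → ∀ r : ℝ, 0 < r →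
      0 < P N {ω | h N ω ∈ Set.Icc (u - r) (u + r)} →
      ∀ᵐ ω ∂(microMeasure P h u r N),
        specificAction P h β u r N ω
          = β * h N ω + (N : ℝ)⁻¹ * Real.log ((canZ P h β N).toReal)
            - (N : ℝ)⁻¹ * Real.log ((P N {ω' | h N ω' ∈ Set.Icc (u - r) (u + r)}).toReal)) ∧
    (∀ N : ℕ, 0 < N → ∀ r : ℝ, 0 < r →
      0 < P N {ω | h N ω ∈ Set.Icc (u - r) (u + r)} →
      ∀ᵐ ω ∂(microMeasure P h u r N),
        |specificAction P h β u r N ω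
          - (β * u + (N : ℝ)⁻¹ * Real.log ((canZ P h β N).toReal)
            - (N : ℝ)⁻¹ * Real.log ((P N {ω' | h N ω' ∈ Set.Icc (u - r) (u + r)}).toReal))|
          ≤ |β| * r) ∧
    (∀ φβ : ℝ,
      Tendsto (fun N : ℕ => -((N : ℝ)⁻¹ * Real.log ((canZ P h β N).toReal))) atTop (𝓝 φβ) →
      ∀ r₀ : ℝ, 0 < r₀ →
      (∀ r ∈ Set.Ioc (0 : ℝ) r₀, ∀ N,
        0 < P N {ω | h N ω ∈ Set.Icc (u - r) (u + r)}) →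
      ∀ L : ℝ → ℝ,
      (∀ r ∈ Set.Ioc (0 : ℝ) r₀,
        Tendsto (fun N : ℕ =>
            (N : ℝ)⁻¹ * Real.log ((P N {ω | h N ω ∈ Set.Icc (u - r) (u + r)}).toReal))
          atTop (𝓝 (L r))) →
      ∀ su : ℝ, Tendsto L (𝓝[>] 0) (𝓝 su) →
      Tendsto (fun r : ℝ =>
          limsup (fun N : ℕ =>
            essSup (fun ω => |specificAction P h β u r N ω - (β * u - su - φβ)|)
              (microMeasure P h u r N)) atTop)
        (𝓝[>] 0) (𝓝 0)) := by
  -- Part 1: exact a.e. formula for the specific action, together with membership in the shell.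
  have part1 : ∀ N : ℕ, 0 < N → ∀ r : ℝ, 0 < r →
      0 < P N {ω | h N ω ∈ Set.Icc (u - r) (u + r)} →
      ∀ᵐ ω ∂(microMeasure P h u r N),
        (specificAction P h β u r N ω
          = β * h N ω + (N : ℝ)⁻¹ * Real.log ((canZ P h β N).toReal)
            - (N : ℝ)⁻¹ * Real.log ((P N {ω' | h N ω' ∈ Set.Icc (u - r) (u + r)}).toReal))
        ∧ ω ∈ {ω' | h N ω' ∈ Set.Icc (u - r) (u + r)} := by
    intro N hN r hr hp
    have hNr : ((N : ℝ)) ≠ 0 := Nat.cast_ne_zero.mpr hN.ne'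
    have hps : 0 < (P N {ω | h N ω ∈ Set.Icc (u - r) (u + r)}).toReal :=
      ENNReal.toReal_pos hp.ne' (measure_ne_top _ _)
    have hZr : 0 < (canZ P h β N).toReal :=
      ENNReal.toReal_pos (hZfin N).1.ne' (hZfin N).2
    filter_upwards [micro_rnDeriv_ae P h hmeas β u r N (hZfin N).1.ne' (hZfin N).2] with ω hω
    refine ⟨?_, hω.2⟩
    rw [specificAction, hω.1]
    rw [ENNReal.toReal_mul, ENNReal.toReal_mul, ENNReal.toReal_inv,
      ENNReal.toReal_ofReal (Real.exp_pos _).le]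
    rw [Real.log_mul (by positivity) (Real.exp_pos _).ne',
      Real.log_mul (by positivity) hZr.ne', Real.log_inv, Real.log_exp]
    field_simp
    ring
  -- Part 2: the a.e. bound.
  have part2 : ∀ N : ℕ, 0 < N → ∀ r : ℝ, 0 < r →
      0 < P N {ω | h N ω ∈ Set.Icc (u - r) (u + r)} →
      ∀ᵐ ω ∂(microMeasure P h u r N),
        |specificAction P h β u r N ω
          - (β * u + (N : ℝ)⁻¹ * Real.log ((canZ P h β N).toReal)
            - (N : ℝ)⁻¹ * Real.log ((P N {ω' | h N ω' ∈ Set.Icc (u - r) (u + r)}).toReal))|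
          ≤ |β| * r := by
    intro N hN r hr hp
    filter_upwards [part1 N hN r hr hp] with ω hω
    have h2 : ω ∈ {ω' | h N ω' ∈ Set.Icc (u - r) (u + r)} := hω.2
    simp only [Set.mem_setOf_eq, Set.mem_Icc] at h2
    rw [show specificAction P h β u r N ω
        - (β * u + (N : ℝ)⁻¹ * Real.log ((canZ P h β N).toReal)
          - (N : ℝ)⁻¹ * Real.log ((P N {ω' | h N ω' ∈ Set.Icc (u - r) (u + r)}).toReal))
        = β * (h N ω - u) by rw [hω.1]; ring]
    rw [abs_mul]
    exact mul_le_mul_of_nonneg_left (abs_le.mpr ⟨by linarith [h2.1], by linarith [h2.2]⟩)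
      (abs_nonneg β)
  refine ⟨fun N hN r hr hp => (part1 N hN r hr hp).mono fun ω hω => hω.1, part2, ?_⟩
  -- Part 3: uniform a.e. convergence to the canonical rate.
  intro φβ hφ r₀ hr₀ hp L hL su hsu
  set c1 : ℕ → ℝ := fun N => (N : ℝ)⁻¹ * Real.log ((canZ P h β N).toReal) with hc1
  set c2 : ℝ → ℕ → ℝ := fun r N =>
    (N : ℝ)⁻¹ * Real.log ((P N {ω | h N ω ∈ Set.Icc (u - r) (u + r)}).toReal) with hc2
  set F : ℝ → ℕ → ℝ := fun r N =>
    essSup (fun ω => |specificAction P h β u r N ω - (β * u - su - φβ)|)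
      (microMeasure P h u r N) with hF
  set b : ℝ → ℕ → ℝ := fun r N => |β| * r + |c1 N + φβ| + |su - c2 r N| with hb
  have hc1lim : Tendsto (fun N => |c1 N + φβ|) atTop (𝓝 0) := by
    have : Tendsto (fun N => c1 N + φβ) atTop (𝓝 0) := by
      have := hφ.neg
      simp only [neg_neg] at this
      simpa using this.add_const φβ
    simpa using this.abs
  have hblim : ∀ r ∈ Set.Ioc (0:ℝ) r₀, Tendsto (b r) atTop (𝓝 (|β| * r + |su - L r|)) := by
    intro r hr
    have h2 : Tendsto (fun N => |su - c2 r N|) atTop (𝓝 (|su - L r|)) :=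
      ((continuous_abs.comp (continuous_const.sub continuous_id)).tendsto (L r)).comp (hL r hr)
    simpa using (tendsto_const_nhds.add hc1lim).add h2
  have hFb : ∀ r ∈ Set.Ioc (0:ℝ) r₀, ∀ N : ℕ, 0 < N → 0 ≤ F r N ∧ F r N ≤ b r N := by
    intro r hr N hN
    haveI : IsProbabilityMeasure (microMeasure P h u r N) :=
      ProbabilityTheory.cond_isProbabilityMeasure (hp r hr N).ne'
    haveI : NeBot (ae (microMeasure P h u r N)) := IsProbabilityMeasure.ae_neBot
    have hae : ∀ᵐ ω ∂(microMeasure P h u r N),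
        |specificAction P h β u r N ω - (β * u - su - φβ)| ≤ b r N := by
      filter_upwards [part2 N hN r hr.1 (hp r hr N)] with ω hω
      have : specificAction P h β u r N ω - (β * u - su - φβ)
          = (specificAction P h β u r N ω - (β * u + c1 N - c2 r N))
            + ((c1 N + φβ) + (su - c2 r N)) := by ring
      rw [this, hb]
      calc _ ≤ |specificAction P h β u r N ω - (β * u + c1 N - c2 r N)|
            + |(c1 N + φβ) + (su - c2 r N)| := abs_add_le _ _
        _ ≤ |β| * r + (|c1 N + φβ| + |su - c2 r N|) := by
            exact add_le_add hω (abs_add_le _ _)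
        _ = _ := by ring
    constructor
    · refine le_limsup_of_frequently_le ?_ ⟨b r N, hae⟩
      exact Eventually.frequently (Eventually.of_forall fun ω => abs_nonneg _)
    · exact limsup_le_of_le
        (isCoboundedUnder_le_of_eventually_le _ (Eventually.of_forall fun ω => abs_nonneg _)) hae
  have hG : ∀ r ∈ Set.Ioc (0:ℝ) r₀,
      0 ≤ limsup (F r) atTop ∧ limsup (F r) atTop ≤ |β| * r + |su - L r| := by
    intro r hr
    have hev : ∀ᶠ N : ℕ in atTop, 0 ≤ F r N ∧ F r N ≤ b r N := by
      filter_upwards [eventually_gt_atTop 0] with N hN using hFb r hr N hN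
    have hbd : IsBoundedUnder (· ≤ ·) atTop (b r) := (hblim r hr).isBoundedUnder_le
    have hFbd : IsBoundedUnder (· ≤ ·) atTop (F r) :=
      hbd.mono_le (hev.mono fun N hN => hN.2)
    constructor
    · exact le_limsup_of_frequently_le ((hev.mono fun N hN => hN.1).frequently) hFbd
    · calc limsup (F r) atTop ≤ limsup (b r) atTop :=
            limsup_le_limsup (hev.mono fun N hN => hN.2)
              (isCoboundedUnder_le_of_eventually_le _ (hev.mono fun N hN => hN.1)) hbd
        _ = |β| * r + |su - L r| := (hblim r hr).limsup_eq
  have hM : Tendsto (fun r => |β| * r + |su - L r|) (𝓝[>] 0) (𝓝 0) := by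
    have h1 : Tendsto (fun r : ℝ => |β| * r) (𝓝[>] 0) (𝓝 0) := by
      have : Tendsto (fun r : ℝ => |β| * r) (𝓝 0) (𝓝 (|β| * 0)) :=
        Filter.Tendsto.const_mul _ tendsto_id
      simpa using this.mono_left nhdsWithin_le_nhds
    have h2 : Tendsto (fun r => |su - L r|) (𝓝[>] 0) (𝓝 0) := by
      have h3 : Tendsto (fun x : ℝ => |su - x|) (𝓝 su) (𝓝 |su - su|) :=
        (continuous_abs.comp (continuous_const.sub continuous_id)).tendsto su
      have h4 : Tendsto (fun r => |su - L r|) (𝓝[>] 0) (𝓝 |su - su|) := h3.comp hsu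
      rw [sub_self, abs_zero] at h4
      exact h4
    simpa using h1.add h2
  have hIoc : Set.Ioc (0:ℝ) r₀ ∈ 𝓝[>] (0:ℝ) := Ioc_mem_nhdsGT hr₀
  refine tendsto_of_tendsto_of_tendsto_of_le_of_le' tendsto_const_nhds hM ?_ ?_
  · filter_upwards [hIoc] with r hr using (hG r hr).1
  · filter_upwards [hIoc] with r hr using (hG r hr).2
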